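/- Every exact frame homomorphism f : L → M is a D-morphism: for every covered prime p of M, the element f∗(p) is a covered prime of L, where f∗ is the right adjoint of f. -/
import Mathlib


/-- A meet (of the set `S`) is exact if it distributes over all joins. -/
def IsExactMeet {L : Type*} [Order.Frame L] (S : Set L) : Prop :=
  ∀ b : L, sInf ((· ⊔ b) '' S) = sInf S ⊔ b

/-- A prime element of a frame. -/
def IsPrimeElem {L : Type*} [Order.Frame L] (p : L) : Prop :=
  ∀ x y : L, x ⊓ y ≤ p → x ≤ p ∨ y ≤ p

/-- A covered element: whenever `⋀ S = p`, some element of `S` equals `p`. -/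
def IsCovered {L : Type*} [Order.Frame L] (p : L) : Prop :=
  ∀ S : Set L, sInf S = p → p ∈ S

/-- Every exact frame homomorphism is a D-morphism: the right adjoint
`f∗(m) = ⋁{x | f x ≤ m}` sends covered primes to covered primes. -/
theorem stmt12 {L M : Type*} [Order.Frame L] [Order.Frame M] (f : FrameHom L M)
    (hf : ∀ S : Set L, IsExactMeet S → IsExactMeet (f '' S) ∧ sInf (f '' S) = f (sInf S))
    (p : M) (hp : IsPrimeElem p) (hcov : IsCovered p) :
    IsPrimeElem (sSup {x : L | f x ≤ p}) ∧ IsCovered (sSup {x : L | f x ≤ p}) := by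
  set a := sSup {x : L | f x ≤ p} with ha
  have hfa : f a ≤ p := by
    rw [ha, map_sSup]
    exact sSup_le (by rintro y ⟨x, hx, rfl⟩; exact hx)
  have hle : ∀ x : L, f x ≤ p → x ≤ a := fun x hx => le_sSup hx
  constructor
  · intro x y hxy
    have hmono : f (x ⊓ y) ≤ f a := OrderHomClass.mono f hxy
    have : f x ⊓ f y ≤ p := by rw [← map_inf]; exact hmono.trans hfa
    rcases hp _ _ this with h | h
    · exact Or.inl (hle _ h)
    · exact Or.inr (hle _ h)
  · intro S hS
    by_contra hna
    set T := {x : L | a < x} with hT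
    have hST : S ⊆ T := by
      intro s hs
      refine lt_of_le_of_ne (hS ▸ sInf_le hs) ?_
      rintro rfl
      exact hna hs
    have hTinf : sInf T = a :=
      le_antisymm ((sInf_le_sInf hST).trans hS.le) (le_sInf fun x hx => hx.le)
    have hTex : IsExactMeet T := by
      intro b
      rw [hTinf]
      refine le_antisymm ?_ (le_sInf ?_)
      · by_cases hb : b ≤ a
        · have h1 : ∀ s ∈ S, sInf ((· ⊔ b) '' T) ≤ s := by
            intro s hs
            have hbs : b ≤ s := hb.trans (hST hs).le
            have : s ⊔ b = s := sup_eq_left.mpr hbs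
            exact (sInf_le ⟨s, hST hs, this⟩)
          exact ((le_sInf h1).trans hS.le).trans le_sup_left
        · set m := sInf ((· ⊔ b) '' T) with hm
          set h := m ⇨ (a ⊔ b) with hh
          have hab : a ⊔ b ≤ h := le_himp_iff.mpr inf_le_left
          have hah : a < h := by
            refine lt_of_le_of_ne (le_sup_left.trans hab) fun he => hb ?_
            exact le_sup_right.trans (hab.trans he.symm.le)
          have hmh : m ≤ h ⊔ b := sInf_le ⟨h, hah, rfl⟩
          calc m = m ⊓ (h ⊔ b) := (inf_eq_left.mpr hmh).symm
            _ = (m ⊓ h) ⊔ (m ⊓ b) := inf_sup_left m h b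
            _ ≤ (a ⊔ b) ⊔ b := sup_le_sup (by rw [inf_comm]; exact himp_inf_le) inf_le_right
            _ = a ⊔ b := by rw [sup_assoc, sup_idem]
      · rintro y ⟨x, hx, rfl⟩
        exact sup_le_sup_right hx.le b
    obtain ⟨hTex', hTinf'⟩ := hf T hTex
    have key : sInf ((· ⊔ p) '' (f '' T)) = p := by
      rw [hTex' p, hTinf', hTinf, sup_eq_right.mpr hfa]
    obtain ⟨y, ⟨x, hxT, rfl⟩, hyp⟩ := hcov _ key
    exact absurd (hle x (le_sup_left.trans hyp.le)) hxT.not_ge
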